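/- Consider the rational vector system with a real symmetric m×m matrix A having nonnegative entries and damping vectors q_{ij} ∈ [0,∞)^m. If the spectral radius of A is strictly greater than 1, then there exists a choice of nonnegative initial conditions v_0,…,v_{k−1} such that the corresponding solution (v_n) has the property that the sequence (‖v_n‖)_{n=1}^∞ is unbounded. -/

import Mathlib

open Matrix Filter

/-- `v` is a solution of the rational vector system
`v_{n,i} = (A v_{n−k})_i / (1 + Σ_{j=1}^{k−1} ⟨q_{ij}, v_{n−j}⟩)` for `n ≥ k`,
with nonnegative values. -/
def IsRationalSolution {m : ℕ} (k : ℕ) (A : Matrix (Fin m) (Fin m) ℝ)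
    (q : Fin m → ℕ → Fin m → ℝ) (v : ℕ → Fin m → ℝ) : Prop :=
  (∀ n i, 0 ≤ v n i) ∧
  ∀ n, k ≤ n → ∀ i,
    v n i = (A *ᵥ v (n - k)) i / (1 + ∑ j ∈ Finset.Ico 1 k, (q i j) ⬝ᵥ v (n - j))

/-- The Euclidean norm on `ℝ^m`. -/
noncomputable def euclNorm {m : ℕ} (w : Fin m → ℝ) : ℝ :=
  Real.sqrt (∑ i, (w i) ^ 2)

/-- Rational vector system with real symmetric `A` having nonnegative
entries and nonnegative damping vectors `q_{ij}`. If the spectral radius of `A` is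
strictly greater than `1`, then there is a choice of nonnegative initial conditions whose
solution `(v_n)` has `(‖v_n‖)` unbounded. -/
theorem stmt_8 {m k : ℕ} (hm : 1 ≤ m) (hk : 2 ≤ k)
    (A : Matrix (Fin m) (Fin m) ℝ) (hsymm : A.IsSymm) (hnnA : ∀ i j, 0 ≤ A i j)
    (q : Fin m → ℕ → Fin m → ℝ) (hq : ∀ i j l, 0 ≤ q i j l)
    (hρ : 1 < spectralRadius ℝ A) :
    ∃ v : ℕ → Fin m → ℝ, IsRationalSolution k A q v ∧
      ¬ BddAbove (Set.range fun n => euclNorm (v n)) := by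
  have hkpos : 0 < k := by omega
  -- extract a real eigenvalue of modulus > 1
  obtain ⟨lam, hlam, hlam1⟩ : ∃ lam : ℝ, lam ∈ spectrum ℝ A ∧ 1 < |lam| := by
    rw [spectralRadius] at hρ
    simp only [lt_iSup_iff] at hρ
    obtain ⟨lam, hmem, h1⟩ := hρ
    refine ⟨lam, hmem, ?_⟩
    rw [← Real.norm_eq_abs]
    have : (1 : ENNReal) < (‖lam‖₊ : ENNReal) := h1
    rw [← ENNReal.coe_one, ENNReal.coe_lt_coe] at this
    exact_mod_cast this
  have hdet : ((algebraMap ℝ (Matrix (Fin m) (Fin m) ℝ)) lam - A).det = 0 := by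
    rw [spectrum.mem_iff] at hlam
    by_contra h
    exact hlam ((Matrix.isUnit_iff_isUnit_det _).2 (isUnit_iff_ne_zero.2 h))
  obtain ⟨x, hx0, hxe⟩ := (Matrix.exists_mulVec_eq_zero_iff).2 hdet
  have hAx : A *ᵥ x = lam • x := by
    rw [Matrix.sub_mulVec, Algebra.algebraMap_eq_smul_one, Matrix.smul_mulVec,
      Matrix.one_mulVec, sub_eq_zero] at hxe
    exact hxe.symm
  -- the nonnegative "eigenvector"
  set u : Fin m → ℝ := fun i => |x i| with hu
  have hun : ∀ i, 0 ≤ u i := fun i => abs_nonneg _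
  have hmvapp : ∀ (B : Matrix (Fin m) (Fin m) ℝ) (y : Fin m → ℝ) i,
      (B *ᵥ y) i = ∑ j, B i j * y j := by
    intro B y i; simp [Matrix.mulVec, dotProduct]
  have hAu : ∀ i, |lam| * u i ≤ (A *ᵥ u) i := by
    intro i
    have h1 : |lam| * u i = |(A *ᵥ x) i| := by
      rw [hAx]; simp [abs_mul, hu]
    rw [h1, hmvapp]
    calc |(A *ᵥ x) i| = |∑ j, A i j * x j| := by rw [hmvapp]
      _ ≤ ∑ j, |A i j * x j| := Finset.abs_sum_le_sum_abs _ _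
      _ = ∑ j, A i j * u j := by
          refine Finset.sum_congr rfl fun j _ => ?_
          rw [abs_mul, abs_of_nonneg (hnnA i j)]
  -- iterates
  set w : ℕ → Fin m → ℝ := fun p => (A ^ p) *ᵥ u with hwdef
  have hw0 : w 0 = u := by simp [hwdef]
  have hwsucc : ∀ p, w (p + 1) = A *ᵥ w p := by
    intro p
    simp only [hwdef, pow_succ']
    rw [← Matrix.mulVec_mulVec]
  have hwpos : ∀ p i, 0 ≤ w p i := by
    intro p
    induction p with
    | zero => intro i; rw [hw0]; exact hun i
    | succ p ih =>
        intro i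
        rw [hwsucc, hmvapp]
        exact Finset.sum_nonneg fun j _ => mul_nonneg (hnnA i j) (ih j)
  -- inner products grow
  set s : ℕ → ℝ := fun p => ∑ i, u i * w p i with hsdef
  have hsym' : ∀ i j, A j i = A i j := by
    intro i j
    have := hsymm
    rw [Matrix.IsSymm] at this
    conv_lhs => rw [← this]
    rfl
  have hstep : ∀ p, |lam| * s p ≤ s (p + 1) := by
    intro p
    have h1 : s (p + 1) = ∑ j, (A *ᵥ u) j * w p j := by
      have h2 : s (p + 1) = u ⬝ᵥ (A *ᵥ w p) := by
        simp only [hsdef, hwsucc p, dotProduct]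
      rw [h2, Matrix.dotProduct_mulVec, ← Matrix.mulVec_transpose, hsymm.eq]
      simp [dotProduct]
    rw [h1, hsdef]
    simp only [Finset.mul_sum]
    refine Finset.sum_le_sum fun j _ => ?_
    have := mul_le_mul_of_nonneg_right (hAu j) (hwpos p j)
    calc |lam| * (u j * w p j) = |lam| * u j * w p j := by ring
      _ ≤ (A *ᵥ u) j * w p j := this
  have hs0 : 0 < s 0 := by
    obtain ⟨i0, hi0⟩ := Function.ne_iff.mp hx0
    refine Finset.sum_pos' (fun i _ => mul_nonneg (hun i) (hwpos 0 i)) ⟨i0, Finset.mem_univ _, ?_⟩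
    rw [hw0]
    have : 0 < |x i0| := abs_pos.mpr hi0
    exact mul_pos this this
  have hsgrow : ∀ p, |lam| ^ p * s 0 ≤ s p := by
    intro p
    induction p with
    | zero => simp
    | succ p ih =>
        calc |lam| ^ (p + 1) * s 0 = |lam| * (|lam| ^ p * s 0) := by ring
          _ ≤ |lam| * s p := by
              have h0 : (0:ℝ) ≤ |lam| := abs_nonneg _
              exact mul_le_mul_of_nonneg_left ih h0
          _ ≤ s (p + 1) := hstep p
  -- the solution
  set v : ℕ → Fin m → ℝ := fun n => if k ∣ n then w (n / k) else 0 with hvdef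
  have hvpos : ∀ n i, 0 ≤ v n i := by
    intro n i
    by_cases h : k ∣ n <;> simp [hvdef, h, hwpos]
  refine ⟨v, ⟨hvpos, ?_⟩, ?_⟩
  · -- the recursion
    intro n hn i
    by_cases hd : k ∣ n
    · -- off-multiples vanish in the denominator
      have hden : ∀ j ∈ Finset.Ico 1 k, (q i j) ⬝ᵥ v (n - j) = 0 := by
        intro j hj
        rw [Finset.mem_Ico] at hj
        have hnd : ¬ k ∣ (n - j) := by
          intro hdvd
          have hjn : j ≤ n := le_trans (le_of_lt hj.2) hn
          have : k ∣ n - (n - j) := Nat.dvd_sub hd hdvd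
          rw [Nat.sub_sub_self hjn] at this
          have := Nat.le_of_dvd (by omega) this
          omega
        simp [hvdef, hnd, dotProduct]
      rw [Finset.sum_congr rfl hden]
      simp only [Finset.sum_const_zero, add_zero, div_one]
      -- now the main equality
      obtain ⟨t, ht⟩ := id hd
      obtain ⟨t', rfl⟩ : ∃ t', t = t' + 1 := by
        refine ⟨t - 1, ?_⟩
        rcases Nat.eq_zero_or_pos t with h0 | h1
        · subst h0; rw [Nat.mul_zero] at ht; omega
        · omega
      have ht' : n = k * t' + k := by rw [ht, Nat.mul_succ]
      have hnk : n - k = k * t' := by omega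
      have hdk : k ∣ n - k := ⟨t', hnk⟩
      have hq1 : n / k = t' + 1 := by rw [ht, Nat.mul_div_cancel_left _ hkpos]
      have hq2 : (n - k) / k = t' := by rw [hnk, Nat.mul_div_cancel_left _ hkpos]
      simp only [hvdef, if_pos hd, if_pos hdk, hq1, hq2]
      rw [hwsucc]
    · -- both sides are zero
      have hndk : ¬ k ∣ (n - k) := by
        intro hdvd
        exact hd (by have := Nat.dvd_add hdvd (dvd_refl k); rwa [Nat.sub_add_cancel hn] at this)
      simp [hvdef, hd, hndk, Matrix.mulVec_zero]
  · -- unboundedness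
    intro hbdd
    obtain ⟨M, hM⟩ := hbdd
    have hM' : ∀ n, euclNorm (v n) ≤ M := by
      intro n
      exact hM (Set.mem_range_self n)
    set S : ℝ := ∑ i, u i with hSdef
    have hSpos : 0 < S := by
      obtain ⟨i0, hi0⟩ := Function.ne_iff.mp hx0
      exact Finset.sum_pos' (fun i _ => hun i) ⟨i0, Finset.mem_univ _, abs_pos.mpr hi0⟩
    -- w p components bounded by euclNorm
    have hcomp : ∀ p j, w p j ≤ euclNorm (w p) := by
      intro p j
      have h1 : (w p j) ^ 2 ≤ ∑ i, (w p i) ^ 2 :=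
        Finset.single_le_sum (f := fun i => (w p i) ^ 2) (fun i _ => sq_nonneg _)
          (Finset.mem_univ j)
      calc w p j = Real.sqrt ((w p j) ^ 2) := (Real.sqrt_sq (hwpos p j)).symm
        _ ≤ euclNorm (w p) := Real.sqrt_le_sqrt h1
    have hwM : ∀ p, euclNorm (w p) ≤ M := by
      intro p
      have hd : k ∣ k * p := dvd_mul_right k p
      have h := hM' (k * p)
      simp only [hvdef, if_pos hd, Nat.mul_div_cancel_left _ hkpos] at h
      exact h
    have hsle : ∀ p, s p ≤ S * M := by
      intro p
      calc s p = ∑ i, u i * w p i := rfl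
        _ ≤ ∑ i, u i * M := Finset.sum_le_sum fun i _ =>
            mul_le_mul_of_nonneg_left (le_trans (hcomp p i) (hwM p)) (hun i)
        _ = S * M := by rw [hSdef, Finset.sum_mul]
    obtain ⟨p, hp⟩ := pow_unbounded_of_one_lt (S * M / s 0) hlam1
    have h1 := hsgrow p
    have h2 := hsle p
    rw [div_lt_iff₀ hs0] at hp
    linarith
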